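/- Let H₀ be a complex Hilbert space, B ∈ B(H₀) an invertible positive operator with 0 ≤ B ≤ I and ker(I−B) = {0}, and set H = H₀ ⊕ H₀, N = {(x, Bx) : x ∈ H₀}, M = {(x, −Bx) : x ∈ H₀}, 𝓐 = {T ∈ B(H) : TN ⊆ N, TM ⊆ M}, and 𝓑 = {C ⊕ D : C, D ∈ B(H₀)}. Set a = √2/2 and let S be the operator on H with block matrix S = [[B^{−1/2}, 0],[0, B^{1/2}]]·[[aI, −aI],[aI, aI]]. Then S is invertible and 𝓐 = S 𝓑 S^{−1}. -/

import Mathlib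

noncomputable section

variable {H₀ : Type*} [NormedAddCommGroup H₀] [InnerProductSpace ℂ H₀] [CompleteSpace H₀]

/-- The operator on `H₀ ⊕ H₀ = WithLp 2 (H₀ × H₀)` given by the block matrix
`[[A, B], [C, D]]`. -/
def blk (A B C D : H₀ →L[ℂ] H₀) : WithLp 2 (H₀ × H₀) →L[ℂ] WithLp 2 (H₀ × H₀) :=
  (((WithLp.prodContinuousLinearEquiv 2 ℂ H₀ H₀).symm :
      H₀ × H₀ →L[ℂ] WithLp 2 (H₀ × H₀)) ∘L ((A.coprod B).prod (C.coprod D))) ∘L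
    ((WithLp.prodContinuousLinearEquiv 2 ℂ H₀ H₀) : WithLp 2 (H₀ × H₀) →L[ℂ] H₀ × H₀)

/-- The subspace `N = {(u, Bu) : u ∈ H₀}` of `H₀ ⊕ H₀`. -/
def graphN (B : H₀ →L[ℂ] H₀) : Set (WithLp 2 (H₀ × H₀)) :=
  {p | (WithLp.equiv 2 (H₀ × H₀) p).2 = B (WithLp.equiv 2 (H₀ × H₀) p).1}

/-- The subspace `M = {(u, −Bu) : u ∈ H₀}` of `H₀ ⊕ H₀`. -/
def graphM (B : H₀ →L[ℂ] H₀) : Set (WithLp 2 (H₀ × H₀)) :=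
  {p | (WithLp.equiv 2 (H₀ × H₀) p).2 = -(B (WithLp.equiv 2 (H₀ × H₀) p).1)}

lemma wext {p q : WithLp 2 (H₀ × H₀)} (h1 : p.fst = q.fst) (h2 : p.snd = q.snd) : p = q := by
  cases p; cases q; congr 1; exact Prod.ext h1 h2

lemma blk_apply (A B C D : H₀ →L[ℂ] H₀) (p : WithLp 2 (H₀ × H₀)) :
    blk A B C D p = (WithLp.equiv 2 (H₀ × H₀)).symm (A p.fst + B p.snd, C p.fst + D p.snd) := rfl

lemma blk_fst (A B C D : H₀ →L[ℂ] H₀) (p : WithLp 2 (H₀ × H₀)) :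
    (blk A B C D p).fst = A p.fst + B p.snd := rfl

lemma blk_snd (A B C D : H₀ →L[ℂ] H₀) (p : WithLp 2 (H₀ × H₀)) :
    (blk A B C D p).snd = C p.fst + D p.snd := rfl

lemma mem_graphN (B : H₀ →L[ℂ] H₀) (p : WithLp 2 (H₀ × H₀)) :
    p ∈ graphN B ↔ p.snd = B p.fst := Iff.rfl

lemma mem_graphM (B : H₀ →L[ℂ] H₀) (p : WithLp 2 (H₀ × H₀)) :
    p ∈ graphM B ↔ p.snd = -(B p.fst) := Iff.rfl

lemma haa : (Real.sqrt 2 / 2) * (Real.sqrt 2 / 2) = 1 / 2 := by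
  rw [div_mul_div_comm, Real.mul_self_sqrt (by norm_num)]; norm_num

/-- Let `B` be an invertible positive contraction on `H₀` with
`ker (I−B) = {0}`, and let `R = B^{1/2}` be its (unique) positive square root, with
inverse `Rinv = B^{−1/2}`.  With `a = √2/2` and
`S = [[B^{−1/2}, 0], [0, B^{1/2}]] · [[aI, −aI], [aI, aI]]`, the operator `S` is
invertible and the algebra `𝓐` of operators leaving `N = {(u, Bu)}` and
`M = {(u, −Bu)}` invariant equals `S 𝓑 S⁻¹`, where `𝓑` is the algebra of
block-diagonal operators. -/
theorem norms_of_vector_functionals_stmt14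
    (B : H₀ →L[ℂ] H₀) (hBpos : B.IsPositive) (hB1 : ((1 : H₀ →L[ℂ] H₀) - B).IsPositive)
    (hBunit : IsUnit B) (hBker : LinearMap.ker (((1 : H₀ →L[ℂ] H₀) - B : H₀ →L[ℂ] H₀) : H₀ →ₗ[ℂ] H₀) = ⊥)
    (R Rinv : H₀ →L[ℂ] H₀) (hRpos : R.IsPositive) (hRsq : R * R = B)
    (hRRinv : R * Rinv = 1) (hRinvR : Rinv * R = 1) :
    IsUnit (blk Rinv 0 0 R *
        blk ((Real.sqrt 2 / 2) • 1) (-((Real.sqrt 2 / 2) • 1))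
          ((Real.sqrt 2 / 2) • 1) ((Real.sqrt 2 / 2) • 1)) ∧
      {T : WithLp 2 (H₀ × H₀) →L[ℂ] WithLp 2 (H₀ × H₀) |
          Set.MapsTo T (graphN B) (graphN B) ∧ Set.MapsTo T (graphM B) (graphM B)} =
        (fun T => (blk Rinv 0 0 R *
              blk ((Real.sqrt 2 / 2) • 1) (-((Real.sqrt 2 / 2) • 1))
                ((Real.sqrt 2 / 2) • 1) ((Real.sqrt 2 / 2) • 1)) * T *
            Ring.inverse (blk Rinv 0 0 R *
              blk ((Real.sqrt 2 / 2) • 1) (-((Real.sqrt 2 / 2) • 1))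
                ((Real.sqrt 2 / 2) • 1) ((Real.sqrt 2 / 2) • 1))) ''
          {T : WithLp 2 (H₀ × H₀) →L[ℂ] WithLp 2 (H₀ × H₀) | ∃ C D, T = blk C 0 0 D} := by
  set a : ℝ := Real.sqrt 2 / 2 with ha_def
  set S : WithLp 2 (H₀ × H₀) →L[ℂ] WithLp 2 (H₀ × H₀) :=
    blk Rinv 0 0 R * blk (a • 1) (-(a • 1)) (a • 1) (a • 1) with hS_def
  set S' : WithLp 2 (H₀ × H₀) →L[ℂ] WithLp 2 (H₀ × H₀) :=
    blk (a • R) (a • Rinv) (-(a • R)) (a • Rinv) with hS'_def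
  have hR1 : ∀ x : H₀, Rinv (R x) = x := fun x => by
    have := DFunLike.congr_fun hRinvR x; simpa using this
  have hR2 : ∀ x : H₀, R (Rinv x) = x := fun x => by
    have := DFunLike.congr_fun hRRinv x; simpa using this
  have hB : ∀ x : H₀, B x = R (R x) := fun x => by
    have := DFunLike.congr_fun hRsq x; simpa using this.symm
  have ha2 : a * a = 1 / 2 := haa
  -- application formulas
  have hSapp : ∀ p : WithLp 2 (H₀ × H₀),
      S p = (WithLp.equiv 2 (H₀ × H₀)).symm
        (Rinv (a • p.fst - a • p.snd), R (a • p.fst + a • p.snd)) := by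
    intro p
    show blk Rinv 0 0 R (blk (a • 1) (-(a • 1)) (a • 1) (a • 1) p) = _
    rw [blk_apply, blk_apply]
    apply wext <;>
      simp [ContinuousLinearMap.smul_apply, sub_eq_add_neg]
  have hS'app : ∀ p : WithLp 2 (H₀ × H₀),
      S' p = (WithLp.equiv 2 (H₀ × H₀)).symm
        (a • R p.fst + a • Rinv p.snd, -(a • R p.fst) + a • Rinv p.snd) := by
    intro p
    rw [hS'_def, blk_apply]
    apply wext <;> simp
  -- S * S' = 1 and S' * S = 1
  have hSS' : S * S' = 1 := by
    ext p
    rw [ContinuousLinearMap.mul_apply, hS'app, hSapp]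
    show (WithLp.equiv 2 (H₀ × H₀)).symm _ = p
    apply wext
    · show Rinv (a • (a • R p.fst + a • Rinv p.snd) - a • (-(a • R p.fst) + a • Rinv p.snd)) = p.fst
      rw [show a • (a • R p.fst + a • Rinv p.snd) - a • (-(a • R p.fst) + a • Rinv p.snd)
            = (2 * (a * a)) • R p.fst by module, ha2]
      norm_num [hR1]
    · show R (a • (a • R p.fst + a • Rinv p.snd) + a • (-(a • R p.fst) + a • Rinv p.snd)) = p.snd
      rw [show a • (a • R p.fst + a • Rinv p.snd) + a • (-(a • R p.fst) + a • Rinv p.snd)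
            = (2 * (a * a)) • Rinv p.snd by module, ha2]
      norm_num [hR2]
  have hS'S : S' * S = 1 := by
    ext p
    rw [ContinuousLinearMap.mul_apply, hSapp, hS'app]
    apply wext
    · show a • R (Rinv (a • p.fst - a • p.snd)) + a • Rinv (R (a • p.fst + a • p.snd)) = p.fst
      rw [hR1, hR2]
      rw [show a • (a • p.fst - a • p.snd) + a • (a • p.fst + a • p.snd) = (2 * (a * a)) • p.fst by
        module, ha2]
      norm_num
    · show -(a • R (Rinv (a • p.fst - a • p.snd))) + a • Rinv (R (a • p.fst + a • p.snd)) = p.snd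
      rw [hR1, hR2]
      rw [show -(a • (a • p.fst - a • p.snd)) + a • (a • p.fst + a • p.snd) = (2 * (a * a)) • p.snd by
        module, ha2]
      norm_num
  have hunit : IsUnit S := ⟨⟨S, S', hSS', hS'S⟩, rfl⟩
  have hinv : Ring.inverse S = S' := by
    rw [show S = ((⟨S, S', hSS', hS'S⟩ : (WithLp 2 (H₀ × H₀) →L[ℂ] WithLp 2 (H₀ × H₀))ˣ) :
      WithLp 2 (H₀ × H₀) →L[ℂ] WithLp 2 (H₀ × H₀)) from rfl, Ring.inverse_unit]
    rfl
  -- geometric lemmas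
  have L1 : ∀ q : WithLp 2 (H₀ × H₀), q.snd = 0 → S q ∈ graphN B := by
    intro q hq
    rw [mem_graphN, hSapp]
    show R (a • q.fst + a • q.snd) = B (Rinv (a • q.fst - a • q.snd))
    rw [hq, hB, hR2]
    simp
  have L2 : ∀ q : WithLp 2 (H₀ × H₀), q.fst = 0 → S q ∈ graphM B := by
    intro q hq
    rw [mem_graphM, hSapp]
    show R (a • q.fst + a • q.snd) = -(B (Rinv (a • q.fst - a • q.snd)))
    rw [hq, hB, hR2]
    simp
  have L3 : ∀ q : WithLp 2 (H₀ × H₀), q ∈ graphN B → (S' q).snd = 0 := by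
    intro q hq
    rw [mem_graphN] at hq
    rw [hS'app]
    show -(a • R q.fst) + a • Rinv q.snd = 0
    rw [hq, hB, hR1]
    simp
  have L4 : ∀ q : WithLp 2 (H₀ × H₀), q ∈ graphM B → (S' q).fst = 0 := by
    intro q hq
    rw [mem_graphM] at hq
    rw [hS'app]
    show a • R q.fst + a • Rinv q.snd = 0
    rw [hq]
    simp [hB, hR1]
  refine ⟨hunit, ?_⟩
  ext T
  simp only [Set.mem_setOf_eq, Set.mem_image]
  constructor
  · rintro ⟨hN, hM⟩
    refine ⟨S' * T * S, ?_, ?_⟩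
    · -- S' * T * S is block diagonal
      set T₀ := S' * T * S with hT0_def
      have hT0app : ∀ p, T₀ p = S' (T (S p)) := fun p => rfl
      set e := WithLp.prodContinuousLinearEquiv 2 ℂ H₀ H₀ with he_def
      refine ⟨(ContinuousLinearMap.fst ℂ H₀ H₀) ∘L ((e : WithLp 2 (H₀ × H₀) →L[ℂ] H₀ × H₀)
          ∘L (T₀ ∘L ((e.symm : H₀ × H₀ →L[ℂ] WithLp 2 (H₀ × H₀))
          ∘L (ContinuousLinearMap.inl ℂ H₀ H₀)))),
        (ContinuousLinearMap.snd ℂ H₀ H₀) ∘L ((e : WithLp 2 (H₀ × H₀) →L[ℂ] H₀ × H₀)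
          ∘L (T₀ ∘L ((e.symm : H₀ × H₀ →L[ℂ] WithLp 2 (H₀ × H₀))
          ∘L (ContinuousLinearMap.inr ℂ H₀ H₀)))), ?_⟩
      have h1 : ∀ x : H₀, (T₀ ((WithLp.equiv 2 (H₀ × H₀)).symm (x, 0))).snd = 0 := by
        intro x
        rw [hT0app]
        exact L3 _ (hN (L1 _ rfl))
      have h2 : ∀ y : H₀, (T₀ ((WithLp.equiv 2 (H₀ × H₀)).symm (0, y))).fst = 0 := by
        intro y
        rw [hT0app]
        exact L4 _ (hM (L2 _ rfl))
      ext p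
      have hsplit : p = (WithLp.equiv 2 (H₀ × H₀)).symm (p.fst, 0) +
          (WithLp.equiv 2 (H₀ × H₀)).symm (0, p.snd) := by
        apply wext
        · show p.fst = p.fst + 0; simp
        · show p.snd = 0 + p.snd; simp
      rw [blk_apply]
      conv_lhs => rw [hsplit, map_add]
      apply wext
      · show (T₀ ((WithLp.equiv 2 (H₀ × H₀)).symm (p.fst, 0))).fst +
            (T₀ ((WithLp.equiv 2 (H₀ × H₀)).symm (0, p.snd))).fst = _
        rw [h2]
        show _ = (T₀ ((WithLp.equiv 2 (H₀ × H₀)).symm (p.fst, 0))).fst + (0 : H₀ →L[ℂ] H₀) p.snd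
        simp
      · show (T₀ ((WithLp.equiv 2 (H₀ × H₀)).symm (p.fst, 0))).snd +
            (T₀ ((WithLp.equiv 2 (H₀ × H₀)).symm (0, p.snd))).snd = _
        rw [h1]
        show _ = (0 : H₀ →L[ℂ] H₀) p.fst + (T₀ ((WithLp.equiv 2 (H₀ × H₀)).symm (0, p.snd))).snd
        simp
    · rw [hinv]
      calc S * (S' * T * S) * S' = (S * S') * T * (S * S') := by
            simp only [mul_assoc]
        _ = T := by rw [hSS']; simp
  · rintro ⟨T₀, ⟨C, D, rfl⟩, rfl⟩
    rw [hinv]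
    have happ : ∀ p, (S * blk C 0 0 D * S') p = S (blk C 0 0 D (S' p)) := fun p => rfl
    constructor
    · intro p hp
      show S (blk C 0 0 D (S' p)) ∈ graphN B
      apply L1
      rw [blk_snd, L3 p hp]
      simp
    · intro p hp
      show S (blk C 0 0 D (S' p)) ∈ graphM B
      apply L2
      rw [blk_fst, L4 p hp]
      simp
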